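/- arXiv:2110.08199 — 2 statements merged into one kernel-verified Lean document; each statement's English description precedes it below -/
import Mathlib

section
/- Let C ≥ 1 and let (X_n) be a sequence of compact, rectifiably path-connected subsets of ℝᵐ, each of which is C-LNE, converging in the Hausdorff distance to a compact set X₀. Then X₀ is C-LNE with the same constant C: for every pair of points v, w ∈ X₀ there exists a rectifiable path α in X₀ joining v to w with length(α) ≤ C‖v − w‖, and hence d_{X₀}(v,w) ≤ C‖v − w‖. -/
open Metric Set Filter Topology ENNReal

/-- The length of a path in a subset `A` of a (pseudo-e)metric space, measured
in the ambient space as the total variation of the path. -/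
noncomputable def pathLength {E : Type*} [PseudoEMetricSpace E] {A : Set E} {p q : A}
    (γ : Path p q) : ℝ≥0∞ :=
  eVariationOn (fun t : unitInterval => (γ t : E)) Set.univ

/-- The inner (length) distance between two points of `A`: the infimum of lengths of
paths in `A` joining them. -/
noncomputable def innerDist {E : Type*} [PseudoEMetricSpace E] (A : Set E) (p q : A) : ℝ≥0∞ :=
  ⨅ γ : Path p q, pathLength γ

/-- `A` is Lipschitz normally embedded with constant `C`. -/
def IsLNE {E : Type*} [NormedAddCommGroup E] (C : ℝ) (A : Set E) : Prop :=
  ∀ p q : A, innerDist A p q ≤ ENNReal.ofReal (C * ‖(p : E) - (q : E)‖)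

/-- Any two points of `A` are joined by a rectifiable (finite-length) path in `A`. -/
def RectifiablyPathConnected {E : Type*} [NormedAddCommGroup E] (A : Set E) : Prop :=
  ∀ p q : A, ∃ γ : Path p q, pathLength γ ≠ ⊤

/-- Every based loop in `A` is homotopic (rel basepoint) to a rectifiable loop. -/
def LoopsRectifiable {E : Type*} [NormedAddCommGroup E] (A : Set E) : Prop :=
  ∀ (x : A) (γ : Path x x), ∃ γ' : Path x x, Path.Homotopic γ γ' ∧ pathLength γ' ≠ ⊤

/-- `ε₀(Y)`: the supremum of all `ε` such that every loop in `Y` of length `< ε`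
is null-homotopic in `Y`. -/
noncomputable def eps0 {E : Type*} [NormedAddCommGroup E] (Y : Set E) : ℝ≥0∞ :=
  sSup {ε : ℝ≥0∞ | ∀ (x : Y) (γ : Path x x),
    pathLength γ < ε → Path.Homotopic γ (Path.refl x)}


lemma reparam {E : Type*} [MetricSpace E] {g : ℝ → E} (hg : ContinuousOn g (Set.Icc 0 1))
    {b : ℝ} (hb : 0 < b) (hvar : eVariationOn g (Set.Icc 0 1) ≤ ENNReal.ofReal b) :
    ∃ f : ℝ → E, (∀ s ∈ Set.Icc (0:ℝ) 1, ∀ s' ∈ Set.Icc (0:ℝ) 1, s ≤ s' →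
        edist (f s) (f s') ≤ ENNReal.ofReal (b * (s' - s))) ∧
      f 0 = g 0 ∧ f 1 = g 1 ∧ ∀ t ∈ Set.Icc (0:ℝ) 1, f t ∈ g '' Set.Icc 0 1 := by
  set V : ℝ → ℝ≥0∞ := fun t => eVariationOn g (Set.Icc 0 t) with hV
  have hVmono : ∀ {t t' : ℝ}, t ≤ t' → V t ≤ V t' := fun h =>
    eVariationOn.mono g (Set.Icc_subset_Icc_right h)
  have hV1 : V 1 ≤ ENNReal.ofReal b := hvar
  have hVne : ∀ t : ℝ, t ≤ 1 → V t ≠ ⊤ :=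
    fun t ht => ((hVmono ht).trans hV1).trans_lt ENNReal.ofReal_lt_top |>.ne
  have hV0 : V 0 = 0 := by
    apply eVariationOn.subsingleton
    simp [Set.Icc_self]
  have hadd : ∀ u u' : ℝ, 0 ≤ u → u ≤ u' → V u + eVariationOn g (Set.Icc u u') = V u' := by
    intro u u' h0 h1
    have := eVariationOn.Icc_add_Icc g (s := Set.univ) h0 h1 (Set.mem_univ u)
    simpa using this
  set S : ℝ → Set ℝ := fun s => {t | t ∈ Set.Icc (0:ℝ) 1 ∧ V t ≤ ENNReal.ofReal (s * b)} with hS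
  have hS0 : ∀ s : ℝ, 0 ≤ s → (0:ℝ) ∈ S s := by
    intro s hs
    refine ⟨⟨le_refl _, zero_le_one⟩, ?_⟩
    rw [hV0]; exact zero_le
  have hbdd : ∀ s, BddAbove (S s) := fun s =>
    (bddAbove_Icc (a := (0:ℝ)) (b := 1)).mono fun t ht => ht.1
  set τ : ℝ → ℝ := fun s => sSup (S s) with hτ
  have hτmem : ∀ s : ℝ, 0 ≤ s → τ s ∈ Set.Icc (0:ℝ) 1 := fun s hs =>
    ⟨le_csSup (hbdd s) (hS0 s hs), csSup_le ⟨0, hS0 s hs⟩ fun t ht => ht.1.2⟩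
  have hVlt : ∀ s t : ℝ, 0 ≤ s → t < τ s → V t ≤ ENNReal.ofReal (s * b) := by
    intro s t hs ht
    obtain ⟨w, hw, htw⟩ := exists_lt_of_lt_csSup ⟨0, hS0 s hs⟩ ht
    exact (hVmono htw.le).trans hw.2
  have hVgt : ∀ s t : ℝ, 0 ≤ s → τ s < t → t ≤ 1 → ENNReal.ofReal (s * b) ≤ V t := by
    intro s t hs hτt ht1
    by_contra hcon
    push_neg at hcon
    have htS : t ∈ S s := ⟨⟨((hτmem s hs).1).trans hτt.le, ht1⟩, hcon.le⟩
    exact absurd (le_csSup (hbdd s) htS) (not_le.2 hτt)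
  -- key continuity helper
  have H : ∀ t t' : ℝ, t ∈ Set.Icc (0:ℝ) 1 → t' ∈ Set.Icc (0:ℝ) 1 → t ≤ t' →
      ∀ D : ℝ≥0∞, (∀ u u' : ℝ, t < u → u ≤ u' → u' < t' → eVariationOn g (Set.Icc u u') ≤ D) →
      edist (g t) (g t') ≤ D := by
    intro t t' ht ht' htt' D hD
    rcases eq_or_lt_of_le htt' with rfl | hlt
    · simp
    apply ENNReal.le_of_forall_pos_le_add
    intro ε εpos _
    have hε2 : (0:ℝ) < (ε : ℝ) / 2 := by positivity
    obtain ⟨δ₁, hδ₁, h1⟩ := Metric.continuousWithinAt_iff.1 (hg t ht) _ hε2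
    obtain ⟨δ₂, hδ₂, h2⟩ := Metric.continuousWithinAt_iff.1 (hg t' ht') _ hε2
    set η : ℝ := min (min δ₁ δ₂) (t' - t) / 2 with hη
    have hηpos : 0 < η := by
      have := sub_pos.2 hlt
      positivity
    set u : ℝ := t + η with hu
    set u' : ℝ := t' - η with hu'
    have hηle : η ≤ (t' - t) / 2 := by
      have := min_le_right (min δ₁ δ₂) (t' - t); rw [hη]; linarith
    have huu' : u ≤ u' := by
      simp only [hu, hu']
      nlinarith [hηle]
    have hu_mem : u ∈ Set.Icc (0:ℝ) 1 := ⟨le_trans ht.1 (by linarith), by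
      have := ht'.2; linarith⟩
    have hu'_mem : u' ∈ Set.Icc (0:ℝ) 1 := ⟨by nlinarith [ht.1], by nlinarith [ht'.2]⟩
    have hud : dist u t < δ₁ := by
      have : |η| = η := abs_of_pos hηpos
      have hη1 : η < δ₁ := by
        have h := min_le_left (min δ₁ δ₂) (t' - t)
        have := min_le_left δ₁ δ₂
        rw [hη]; linarith
      simp [hu, Real.dist_eq, abs_of_pos hηpos, hη1]
    have hu'd : dist u' t' < δ₂ := by
      have hη2 : η < δ₂ := by
        have h := min_le_left (min δ₁ δ₂) (t' - t)
        have := min_le_right δ₁ δ₂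
        rw [hη]; linarith
      simp [hu', Real.dist_eq, abs_sub_comm, abs_of_pos hηpos, hη2]
    have e1 : dist (g u) (g t) < (ε : ℝ) / 2 := h1 hu_mem hud
    have e2 : dist (g u') (g t') < (ε : ℝ) / 2 := h2 hu'_mem hu'd
    have emid : edist (g u) (g u') ≤ D :=
      (eVariationOn.edist_le g (Set.left_mem_Icc.2 huu') (Set.right_mem_Icc.2 huu')).trans
        (hD u u' (by linarith) huu' (by simp only [hu']; linarith))
    calc edist (g t) (g t') ≤ edist (g t) (g u) + edist (g u) (g u') + edist (g u') (g t') :=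
          edist_triangle4 _ _ _ _
      _ ≤ ENNReal.ofReal ((ε:ℝ)/2) + D + ENNReal.ofReal ((ε:ℝ)/2) := by
          gcongr
          · rw [edist_dist]
            exact ENNReal.ofReal_le_ofReal (by rw [dist_comm]; exact e1.le)
          · rw [edist_dist]
            exact ENNReal.ofReal_le_ofReal e2.le
      _ = D + ε := by
          rw [add_comm _ D, add_assoc, ← ENNReal.ofReal_add (by positivity) (by positivity)]
          norm_num [ENNReal.ofReal_coe_nnreal]
  have hτmono : ∀ {s s' : ℝ}, 0 ≤ s → s ≤ s' → τ s ≤ τ s' := by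
    intro s s' hs hss'
    apply csSup_le_csSup (hbdd s') ⟨0, hS0 s hs⟩
    intro t ht
    exact ⟨ht.1, ht.2.trans (ENNReal.ofReal_le_ofReal (by nlinarith))⟩
  refine ⟨fun s => g (τ s), ?_, ?_, ?_, ?_⟩
  · intro s hs s' hs' hss'
    apply H _ _ (hτmem s hs.1) (hτmem s' hs'.1) (hτmono hs.1 hss')
    intro u u' hu huu' hu'
    have h0u : 0 ≤ u := le_trans (hτmem s hs.1).1 hu.le
    have hu'1 : u' ≤ 1 := le_trans hu'.le (hτmem s' hs'.1).2
    have key := hadd u u' h0u huu'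
    have hVu : ENNReal.ofReal (s * b) ≤ V u := hVgt s u hs.1 hu (le_trans huu' hu'1)
    have hVu' : V u' ≤ ENNReal.ofReal (s' * b) := hVlt s' u' hs'.1 hu'
    rw [← ENNReal.add_le_add_iff_left (hVne u (le_trans huu' hu'1)), key]
    calc V u' ≤ ENNReal.ofReal (s' * b) := hVu'
      _ = ENNReal.ofReal (s * b + b * (s' - s)) := by ring_nf
      _ = ENNReal.ofReal (s * b) + ENNReal.ofReal (b * (s' - s)) := by
          rw [ENNReal.ofReal_add (mul_nonneg hs.1 hb.le) (by nlinarith)]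
      _ ≤ V u + ENNReal.ofReal (b * (s' - s)) := by gcongr
  · show g (τ 0) = g 0
    symm
    rw [← edist_eq_zero, ← le_zero_iff]
    apply H 0 (τ 0) ⟨le_refl _, zero_le_one⟩ (hτmem 0 le_rfl) (hτmem 0 le_rfl).1
    intro u u' hu huu' hu'
    have : V u' ≤ ENNReal.ofReal (0 * b) := hVlt 0 u' le_rfl hu'
    rw [zero_mul, ENNReal.ofReal_zero, le_zero_iff] at this
    calc eVariationOn g (Set.Icc u u') ≤ V u' :=
          eVariationOn.mono g (Set.Icc_subset_Icc hu.le le_rfl)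
      _ ≤ 0 := this.le
  · have hτ1 : τ 1 = 1 := by
      refine le_antisymm (hτmem 1 zero_le_one).2 ?_
      apply le_csSup (hbdd 1)
      exact ⟨⟨zero_le_one, le_refl _⟩, by rwa [one_mul]⟩
    show g (τ 1) = g 1
    rw [hτ1]
  · intro t ht
    exact ⟨τ t, hτmem t ht.1, rfl⟩

theorem stmt3 {m : ℕ} (C : ℝ) (hC : 1 ≤ C)
    (X : ℕ → Set (EuclideanSpace ℝ (Fin m))) (X₀ : Set (EuclideanSpace ℝ (Fin m)))
    (hc : ∀ n, IsCompact (X n)) (hp : ∀ n, RectifiablyPathConnected (X n))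
    (hL : ∀ n, IsLNE C (X n)) (hX₀c : IsCompact X₀)
    (hconv : Tendsto (fun n => EMetric.hausdorffEdist (X n) X₀) atTop (𝓝 0)) :
    ∀ v w : X₀,
      (∃ γ : Path v w,
        pathLength γ ≤ ENNReal.ofReal (C * ‖(v : EuclideanSpace ℝ (Fin m)) - (w : EuclideanSpace ℝ (Fin m))‖)) ∧
      innerDist X₀ v w ≤
        ENNReal.ofReal (C * ‖(v : EuclideanSpace ℝ (Fin m)) - (w : EuclideanSpace ℝ (Fin m))‖) := by
  intro v w
  classical
  set L : ℝ := C * ‖(v : (EuclideanSpace ℝ (Fin m))) - (w : (EuclideanSpace ℝ (Fin m)))‖ with hLdef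
  have hC0 : (0:ℝ) < C := lt_of_lt_of_le one_pos hC
  have hL0 : 0 ≤ L := mul_nonneg hC0.le (norm_nonneg _)
  suffices hmain : ∃ γ : Path v w, pathLength γ ≤ ENNReal.ofReal L by
    obtain ⟨γ, hγ⟩ := hmain
    exact ⟨⟨γ, hγ⟩, le_trans (iInf_le _ γ) hγ⟩
  set d : ℕ → ℝ≥0∞ := fun n => EMetric.hausdorffEdist (X n) X₀ with hd
  set ε : ℕ → ℝ := fun n => (d n).toReal + 1 / (n + 1) with hεdef
  set a : ℕ → ℝ := fun n => L + 2 * C * ε n + 1 / (n + 1) with hadef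
  set Q : ℕ → Prop := fun n => ∃ F : ℝ → (EuclideanSpace ℝ (Fin m)),
    (∀ s ∈ Set.Icc (0:ℝ) 1, ∀ s' ∈ Set.Icc (0:ℝ) 1,
        edist (F s) (F s') ≤ ENNReal.ofReal (a n * |s' - s|)) ∧
    (∀ t ∈ Set.Icc (0:ℝ) 1, F t ∈ X n) ∧
    edist (F 0) (v : (EuclideanSpace ℝ (Fin m))) ≤ ENNReal.ofReal (ε n) ∧
    edist (F 1) (w : (EuclideanSpace ℝ (Fin m))) ≤ ENNReal.ofReal (ε n) with hQdef
  have hQ : ∀ᶠ n in atTop, Q n := by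
    filter_upwards [hconv.eventually_lt_const (zero_lt_one : (0:ℝ≥0∞) < 1)] with n hn
    have hdne : d n ≠ ⊤ := (hn.trans ENNReal.one_lt_top).ne
    have hδpos : (0:ℝ) < 1 / (n + 1) := by positivity
    have hεpos : 0 < ε n := by
      have := ENNReal.toReal_nonneg (a := d n); rw [hεdef]; positivity
    have hofReal : d n + ENNReal.ofReal (1/(n+1)) = ENNReal.ofReal (ε n) := by
      rw [hεdef, ENNReal.ofReal_add ENNReal.toReal_nonneg hδpos.le, ENNReal.ofReal_toReal hdne]
    have h1 : EMetric.hausdorffEdist X₀ (X n) < d n + ENNReal.ofReal (1/(n+1)) := by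
      have hcomm : EMetric.hausdorffEdist X₀ (X n) = EMetric.hausdorffEdist (X n) X₀ :=
        Metric.hausdorffEDist_comm
      rw [hcomm]
      exact ENNReal.lt_add_right hdne (ENNReal.ofReal_pos.2 hδpos).ne'
    obtain ⟨p, hpX, hpv⟩ := EMetric.exists_edist_lt_of_hausdorffEdist_lt v.2 h1
    obtain ⟨q, hqX, hqw⟩ := EMetric.exists_edist_lt_of_hausdorffEdist_lt w.2 h1
    rw [hofReal, edist_lt_ofReal] at hpv hqw
    have hnorm : ‖p - q‖ ≤ ‖(v:(EuclideanSpace ℝ (Fin m))) - (w:(EuclideanSpace ℝ (Fin m)))‖ + 2 * ε n := by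
      have h4 : dist p q ≤ dist p (v:(EuclideanSpace ℝ (Fin m))) + dist (v:(EuclideanSpace ℝ (Fin m))) (w:(EuclideanSpace ℝ (Fin m))) + dist (w:(EuclideanSpace ℝ (Fin m))) q :=
        dist_triangle4 _ _ _ _
      rw [dist_eq_norm, dist_eq_norm] at h4
      rw [dist_comm] at hpv
      rw [dist_eq_norm] at hpv hqw
      calc ‖p - q‖ ≤ ‖p - (v:(EuclideanSpace ℝ (Fin m)))‖ + ‖(v:(EuclideanSpace ℝ (Fin m))) - (w:(EuclideanSpace ℝ (Fin m)))‖ + ‖(w:(EuclideanSpace ℝ (Fin m))) - q‖ := h4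
        _ ≤ ‖(v:(EuclideanSpace ℝ (Fin m))) - (w:(EuclideanSpace ℝ (Fin m)))‖ + 2 * ε n := by
            rw [← norm_neg ((w:(EuclideanSpace ℝ (Fin m))) - q)] at hqw ⊢
            simp only [neg_sub] at *
            linarith
    obtain ⟨γn, hγn⟩ : ∃ γn : Path (⟨p, hpX⟩ : X n) ⟨q, hqX⟩,
        pathLength γn < ENNReal.ofReal (C * ‖p - q‖) + ENNReal.ofReal (1/(n+1)) := by
      have hlt : innerDist (X n) ⟨p, hpX⟩ ⟨q, hqX⟩
          < ENNReal.ofReal (C * ‖p - q‖) + ENNReal.ofReal (1/(n+1)) :=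
        (hL n ⟨p, hpX⟩ ⟨q, hqX⟩).trans_lt
          (ENNReal.lt_add_right ENNReal.ofReal_ne_top (ENNReal.ofReal_pos.2 hδpos).ne')
      rw [innerDist] at hlt
      exact iInf_lt_iff.1 hlt
    set b : ℝ := C * ‖p - q‖ + 1/(n+1) with hbdef
    have hbpos : 0 < b := by
      have : 0 ≤ C * ‖p - q‖ := mul_nonneg hC0.le (norm_nonneg _)
      rw [hbdef]; linarith
    set g : ℝ → (EuclideanSpace ℝ (Fin m)) := fun t => ((γn (Set.projIcc 0 1 zero_le_one t)) : (EuclideanSpace ℝ (Fin m))) with hgdef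
    have hgc : Continuous g :=
      continuous_subtype_val.comp (γn.continuous.comp continuous_projIcc)
    have hgvar : eVariationOn g (Set.Icc 0 1) ≤ ENNReal.ofReal b := by
      have hcomp := eVariationOn.comp_eq_of_monotoneOn
        (fun t : unitInterval => ((γn t : (EuclideanSpace ℝ (Fin m))))) (Set.projIcc 0 1 zero_le_one)
        ((monotone_projIcc _).monotoneOn (Set.Icc 0 1))
      have himg : Set.projIcc (0:ℝ) 1 zero_le_one '' (Set.Icc 0 1) = Set.univ := by
        apply Set.eq_univ_of_forall
        intro u
        exact ⟨(u : ℝ), u.2, Set.projIcc_val zero_le_one u⟩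
      have : eVariationOn g (Set.Icc 0 1) = pathLength γn := by
        rw [pathLength, ← himg, ← hcomp]; rfl
      rw [this, hbdef, ENNReal.ofReal_add (mul_nonneg hC0.le (norm_nonneg _)) hδpos.le]
      exact hγn.le
    obtain ⟨F, hFl, hF0, hF1, hFmem⟩ := reparam hgc.continuousOn hbpos hgvar
    have hg0 : g 0 = p := by
      rw [hgdef]
      simp only [Set.projIcc_left]
      have : (⟨0, Set.left_mem_Icc.2 zero_le_one⟩ : Set.Icc (0:ℝ) 1) = 0 := rfl
      rw [this, γn.source]
    have hg1 : g 1 = q := by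
      rw [hgdef]
      simp only [Set.projIcc_right]
      have : (⟨1, Set.right_mem_Icc.2 zero_le_one⟩ : Set.Icc (0:ℝ) 1) = 1 := rfl
      rw [this, γn.target]
    have hba : b ≤ a n := by
      have h2 := mul_le_mul_of_nonneg_left hnorm hC0.le
      rw [hbdef, hadef]
      show C * ‖p - q‖ + 1 / (n + 1 : ℝ) ≤ L + 2 * C * ε n + 1 / (n + 1 : ℝ)
      rw [hLdef]
      ring_nf at h2 ⊢
      linarith
    refine ⟨F, ?_, ?_, ?_, ?_⟩
    · intro s hs s' hs'
      rcases le_total s s' with h | h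
      · refine (hFl s hs s' hs' h).trans (ENNReal.ofReal_le_ofReal ?_)
        rw [abs_of_nonneg (sub_nonneg.2 h)]
        exact mul_le_mul_of_nonneg_right hba (sub_nonneg.2 h)
      · rw [edist_comm]
        refine (hFl s' hs' s hs h).trans (ENNReal.ofReal_le_ofReal ?_)
        rw [abs_sub_comm, abs_of_nonneg (sub_nonneg.2 h)]
        exact mul_le_mul_of_nonneg_right hba (sub_nonneg.2 h)
    · intro t ht
      obtain ⟨u, -, hu⟩ := hFmem t ht
      rw [← hu]
      exact (γn _).2
    · rw [hF0, hg0, edist_comm]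
      exact (edist_le_ofReal hεpos.le).2 hpv.le
    · rw [hF1, hg1, edist_comm]
      exact (edist_le_ofReal hεpos.le).2 hqw.le
  -- limits of the error terms
  have hεlim : Tendsto ε atTop (𝓝 0) := by
    have h1 : Tendsto (fun n => (d n).toReal) atTop (𝓝 (0:ℝ)) := by
      have := (ENNReal.tendsto_toReal (a := 0) (by simp)).comp hconv
      simpa [Function.comp_def] using this
    have h2 : Tendsto (fun n : ℕ => 1 / (n + 1 : ℝ)) atTop (𝓝 0) :=
      tendsto_one_div_add_atTop_nhds_zero_nat
    have h3 := h1.add h2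
    rw [hεdef]
    simpa using h3
  have halim : Tendsto a atTop (𝓝 L) := by
    have h2 : Tendsto (fun n : ℕ => 1 / (n + 1 : ℝ)) atTop (𝓝 0) :=
      tendsto_one_div_add_atTop_nhds_zero_nat
    have h5 : Tendsto (fun n : ℕ => L + 2 * C * ε n + 1 / (n + 1 : ℝ)) atTop
        (𝓝 (L + 2 * C * 0 + 0)) :=
      (tendsto_const_nhds.add (hεlim.const_mul (2 * C))).add h2
    rw [hadef]
    convert h5 using 2
    ring
  set 𝒰 : Ultrafilter ℕ := Ultrafilter.of atTop with h𝒰def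
  have h𝒰 : (𝒰 : Filter ℕ) ≤ atTop := Ultrafilter.of_le _
  set K : Set (EuclideanSpace ℝ (Fin m)) := Metric.cthickening 1 X₀ with hKdef
  have hKc : IsCompact K := hX₀c.cthickening
  have hXK : ∀ᶠ n in atTop, X n ⊆ K := by
    filter_upwards [hconv.eventually_lt_const (zero_lt_one : (0:ℝ≥0∞) < 1)] with n hn x hx
    rw [hKdef, Metric.mem_cthickening_iff]
    calc EMetric.infEdist x X₀ ≤ d n := EMetric.infEdist_le_hausdorffEdist_of_mem hx
      _ ≤ ENNReal.ofReal 1 := by simpa using hn.le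
  set F : ℕ → ℝ → EuclideanSpace ℝ (Fin m) :=
    fun n => if h : Q n then h.choose else fun _ => (v : EuclideanSpace ℝ (Fin m)) with hFdef
  have hFp : ∀ᶠ n in atTop,
      (∀ s ∈ Set.Icc (0:ℝ) 1, ∀ s' ∈ Set.Icc (0:ℝ) 1,
        edist (F n s) (F n s') ≤ ENNReal.ofReal (a n * |s' - s|)) ∧
      (∀ t ∈ Set.Icc (0:ℝ) 1, F n t ∈ X n) ∧
      edist (F n 0) (v : EuclideanSpace ℝ (Fin m)) ≤ ENNReal.ofReal (ε n) ∧
      edist (F n 1) (w : EuclideanSpace ℝ (Fin m)) ≤ ENNReal.ofReal (ε n) := by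
    filter_upwards [hQ] with n hn
    have : F n = hn.choose := by rw [hFdef]; simp only [dif_pos hn]
    rw [this]
    exact hn.choose_spec
  have hlim : ∀ t ∈ Set.Icc (0:ℝ) 1, ∃ x ∈ X₀,
      Tendsto (fun n => F n t) (𝒰 : Filter ℕ) (𝓝 x) := by
    intro t ht
    have hmemK : ∀ᶠ n in (𝒰 : Filter ℕ), F n t ∈ K := by
      filter_upwards [(hXK.and hFp).filter_mono h𝒰] with n hn
      exact hn.1 (hn.2.2.1 t ht)
    obtain ⟨x, hxK, hx⟩ := hKc.ultrafilter_le_nhds (𝒰.map (fun n => F n t))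
      (by rwa [Ultrafilter.coe_map, Filter.le_principal_iff, Filter.mem_map])
    rw [Ultrafilter.coe_map] at hx
    have hx' : Tendsto (fun n => F n t) (𝒰 : Filter ℕ) (𝓝 x) := hx
    have T1 : Tendsto (fun n => EMetric.infEdist (F n t) X₀) (𝒰 : Filter ℕ)
        (𝓝 (EMetric.infEdist x X₀)) :=
      (EMetric.continuous_infEdist.tendsto x).comp hx'
    have T2 : Tendsto (fun n => EMetric.infEdist (F n t) X₀) (𝒰 : Filter ℕ) (𝓝 0) := by
      apply tendsto_of_tendsto_of_tendsto_of_le_of_le' tendsto_const_nhds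
        (hconv.mono_left h𝒰)
      · exact Filter.Eventually.of_forall fun n => zero_le
      · filter_upwards [hFp.filter_mono h𝒰] with n hn
        exact EMetric.infEdist_le_hausdorffEdist_of_mem (hn.2.1 t ht)
    have hx0 : EMetric.infEdist x X₀ = 0 := tendsto_nhds_unique T1 T2
    exact ⟨x, (EMetric.mem_iff_infEdist_zero_of_closed hX₀c.isClosed).2 hx0, hx'⟩
  choose! G hG1 hG2 using hlim
  have hGlip : ∀ s ∈ Set.Icc (0:ℝ) 1, ∀ s' ∈ Set.Icc (0:ℝ) 1,
      edist (G s) (G s') ≤ ENNReal.ofReal (L * |s' - s|) := by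
    intro s hs s' hs'
    have e1 : Tendsto (fun n => edist (F n s) (F n s')) (𝒰 : Filter ℕ)
        (𝓝 (edist (G s) (G s'))) := (hG2 s hs).edist (hG2 s' hs')
    have e2 : Tendsto (fun n => ENNReal.ofReal (a n * |s' - s|)) (𝒰 : Filter ℕ)
        (𝓝 (ENNReal.ofReal (L * |s' - s|))) :=
      (ENNReal.continuous_ofReal.tendsto _).comp ((halim.mono_left h𝒰).mul_const _)
    refine le_of_tendsto_of_tendsto e1 e2 ?_
    filter_upwards [hFp.filter_mono h𝒰] with n hn using hn.1 s hs s' hs'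
  have hεlim0 : Tendsto (fun n => ENNReal.ofReal (ε n)) (𝒰 : Filter ℕ) (𝓝 0) := by
    have := (ENNReal.continuous_ofReal.tendsto 0).comp (hεlim.mono_left h𝒰)
    simpa [Function.comp_def] using this
  have hG0 : G 0 = (v : EuclideanSpace ℝ (Fin m)) := by
    have e1 : Tendsto (fun n => edist (F n 0) (v : EuclideanSpace ℝ (Fin m)))
        (𝒰 : Filter ℕ) (𝓝 (edist (G 0) (v : EuclideanSpace ℝ (Fin m)))) :=
      (hG2 0 ⟨le_rfl, zero_le_one⟩).edist tendsto_const_nhds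
    have hle : edist (G 0) (v : EuclideanSpace ℝ (Fin m)) ≤ 0 :=
      le_of_tendsto_of_tendsto e1 hεlim0
        (by filter_upwards [hFp.filter_mono h𝒰] with n hn using hn.2.2.1)
    exact edist_eq_zero.1 (le_antisymm hle zero_le)
  have hG1' : G 1 = (w : EuclideanSpace ℝ (Fin m)) := by
    have e1 : Tendsto (fun n => edist (F n 1) (w : EuclideanSpace ℝ (Fin m)))
        (𝒰 : Filter ℕ) (𝓝 (edist (G 1) (w : EuclideanSpace ℝ (Fin m)))) :=
      (hG2 1 ⟨zero_le_one, le_rfl⟩).edist tendsto_const_nhds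
    have hle : edist (G 1) (w : EuclideanSpace ℝ (Fin m)) ≤ 0 :=
      le_of_tendsto_of_tendsto e1 hεlim0
        (by filter_upwards [hFp.filter_mono h𝒰] with n hn using hn.2.2.2)
    exact edist_eq_zero.1 (le_antisymm hle zero_le)
  have hGlip' : LipschitzOnWith (Real.toNNReal L) G (Set.Icc 0 1) := by
    intro x hx y hy
    calc edist (G x) (G y) ≤ ENNReal.ofReal (L * |y - x|) := hGlip x hx y hy
      _ = ENNReal.ofReal L * ENNReal.ofReal |y - x| := ENNReal.ofReal_mul hL0
      _ = ↑(Real.toNNReal L) * edist x y := by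
          rw [edist_dist, Real.dist_eq, abs_sub_comm]
          rfl
  have hGcont : Continuous fun t : unitInterval => G (t : ℝ) :=
    hGlip'.continuousOn.comp_continuous continuous_subtype_val (fun t => t.2)
  set γ₀ : Path v w :=
    { toFun := fun t => ⟨G (t : ℝ), hG1 (t : ℝ) t.2⟩
      continuous_toFun := hGcont.subtype_mk _
      source' := Subtype.ext (by simpa using hG0)
      target' := Subtype.ext (by simpa using hG1') } with hγ₀def
  refine ⟨γ₀, ?_⟩
  have hval : pathLength γ₀ = eVariationOn G (Set.Icc 0 1) := by
    rw [pathLength]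
    have hcomp := eVariationOn.comp_eq_of_monotoneOn G
      (fun t : unitInterval => (t : ℝ))
      ((Subtype.strictMono_coe _).monotone.monotoneOn Set.univ)
    have himg : (fun t : unitInterval => (t : ℝ)) '' Set.univ = Set.Icc 0 1 :=
      Subtype.coe_image_univ _
    rw [← himg, ← hcomp]
    rfl
  have hidvar : eVariationOn (id : ℝ → ℝ) (Set.Icc 0 1) ≤ ENNReal.ofReal 1 := by
    have := MonotoneOn.eVariationOn_le (f := (id : ℝ → ℝ)) (s := Set.Icc (0:ℝ) 1)
      monotoneOn_id (Set.left_mem_Icc.2 zero_le_one) (Set.right_mem_Icc.2 zero_le_one)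
    rw [Set.inter_self] at this
    simpa using this
  calc pathLength γ₀ = eVariationOn G (Set.Icc 0 1) := hval
    _ = eVariationOn (G ∘ id) (Set.Icc 0 1) := rfl
    _ ≤ ↑(Real.toNNReal L) * eVariationOn (id : ℝ → ℝ) (Set.Icc 0 1) :=
        hGlip'.comp_eVariationOn_le (Set.mapsTo_id _)
    _ ≤ ↑(Real.toNNReal L) * ENNReal.ofReal 1 := by gcongr
    _ = ENNReal.ofReal L := by
        rw [ENNReal.ofReal_one, mul_one]
        rfl
end

section
/- The real cusp X = {(x,y) ∈ ℝ² : x² = y³} is not LNE at 0: for every open neighborhood U of 0 and every constant C ≥ 1 there exist points p, q ∈ X ∩ U with d_{X∩U}(p,q) > C‖p − q‖. -/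
open Metric Set Filter Topology ENNReal Pointwise

noncomputable def cuspVec (a b : ℝ) : EuclideanSpace ℝ (Fin 2) :=
  (WithLp.equiv 2 (Fin 2 → ℝ)).symm ![a, b]

lemma cuspVec_apply0 (a b : ℝ) : cuspVec a b 0 = a := rfl
lemma cuspVec_apply1 (a b : ℝ) : cuspVec a b 1 = b := rfl

lemma cuspVec_sub (a b c d : ℝ) : cuspVec a b - cuspVec c d = cuspVec (a-c) (b-d) := by
  ext i; fin_cases i <;> rfl

lemma cuspVec_norm (a b : ℝ) : ‖cuspVec a b‖ = Real.sqrt (a^2+b^2) := by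
  rw [EuclideanSpace.norm_eq]
  simp [cuspVec, Fin.sum_univ_two, sq_abs]


theorem stmt18 :
    ∀ U : Set (EuclideanSpace ℝ (Fin 2)), IsOpen U → (0 : EuclideanSpace ℝ (Fin 2)) ∈ U →
      ∀ C : ℝ, 1 ≤ C →
        ∃ p q : ({v : EuclideanSpace ℝ (Fin 2) | v 0 ^ 2 = v 1 ^ 3} ∩ U : Set (EuclideanSpace ℝ (Fin 2))),
          ENNReal.ofReal (C * ‖(p : EuclideanSpace ℝ (Fin 2)) - (q : EuclideanSpace ℝ (Fin 2))‖) <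
            innerDist ({v : EuclideanSpace ℝ (Fin 2) | v 0 ^ 2 = v 1 ^ 3} ∩ U) p q := by
  intro U hU hU0 C hC
  set X : Set (EuclideanSpace ℝ (Fin 2)) := {v | v 0 ^ 2 = v 1 ^ 3} with hX
  obtain ⟨ε, hε, hball⟩ := Metric.isOpen_iff.mp hU 0 hU0
  have hC0 : (0:ℝ) < C := lt_of_lt_of_le one_pos hC
  set t : ℝ := min (ε/2) (1/(2*C)) with htdef
  have ht0 : 0 < t := lt_min (by positivity) (by positivity)
  have htε : t ≤ ε/2 := min_le_left _ _
  have htC : t ≤ 1/(2*C) := min_le_right _ _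
  have ht1 : t ≤ 1 := by
    refine htC.trans ?_
    rw [div_le_one (by positivity)]; linarith
  set p : EuclideanSpace ℝ (Fin 2) := cuspVec (t^3) (t^2) with hp
  set q : EuclideanSpace ℝ (Fin 2) := cuspVec (-(t^3)) (t^2) with hq
  -- norms
  have hnorm_aux : Real.sqrt ((t^3)^2 + (t^2)^2) < ε := by
    rw [Real.sqrt_lt' hε]
    have h1 : t^2 ≤ (ε/2)^2 := pow_le_pow_left₀ ht0.le htε 2
    nlinarith [pow_le_pow_of_le_one ht0.le ht1 (show 2 ≤ 6 by norm_num),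
      pow_le_pow_of_le_one ht0.le ht1 (show 2 ≤ 4 by norm_num), sq_nonneg t]
  have hpU : p ∈ U := by
    apply hball
    rw [Metric.mem_ball, dist_zero_right, hp, cuspVec_norm]
    exact hnorm_aux
  have hqU : q ∈ U := by
    apply hball
    rw [Metric.mem_ball, dist_zero_right, hq, cuspVec_norm]
    simpa using hnorm_aux
  have hpX : p ∈ X := by show p 0 ^ 2 = p 1 ^ 3; rw [hp, cuspVec_apply0, cuspVec_apply1]; ring
  have hqX : q ∈ X := by show q 0 ^ 2 = q 1 ^ 3; rw [hq, cuspVec_apply0, cuspVec_apply1]; ring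
  have ht2p : t^2 ≤ ‖p‖ := by
    rw [hp, cuspVec_norm]
    have : t^2 = Real.sqrt ((t^2)^2) := (Real.sqrt_sq (by positivity)).symm
    rw [this]
    exact Real.sqrt_le_sqrt (by nlinarith [sq_nonneg (t^3)])
  have ht2q : t^2 ≤ ‖q‖ := by
    rw [hq, cuspVec_norm]
    have : t^2 = Real.sqrt ((t^2)^2) := (Real.sqrt_sq (by positivity)).symm
    rw [this]
    exact Real.sqrt_le_sqrt (by nlinarith [sq_nonneg (t^3)])
  have hpq : ‖p - q‖ = 2*t^3 := by
    rw [hp, hq, cuspVec_sub]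
    have h1 : t^3 - -(t^3) = 2*t^3 := by ring
    have h2 : t^2 - t^2 = (0:ℝ) := by ring
    rw [h1, h2, cuspVec_norm]
    rw [show (2*t^3)^2 + (0:ℝ)^2 = (2*t^3)^2 by ring]
    exact Real.sqrt_sq (by positivity)
  refine ⟨⟨p, hpX, hpU⟩, ⟨q, hqX, hqU⟩, ?_⟩
  have key : ENNReal.ofReal (2*t^2) ≤ innerDist (X ∩ U) ⟨p, hpX, hpU⟩ ⟨q, hqX, hqU⟩ := by
    refine le_iInf fun γ => ?_
    -- the path must pass through 0
    set g : unitInterval → EuclideanSpace ℝ (Fin 2) := fun τ => (γ τ : EuclideanSpace ℝ (Fin 2)) with hg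
    have hgc : Continuous g :=
      continuous_subtype_val.comp γ.continuous
    have hf : Continuous (fun τ => g τ 0) := (EuclideanSpace.proj (0 : Fin 2)).continuous.comp hgc
    have hf0 : g 0 0 = t^3 := by rw [hg]; simp [γ.source]; rfl
    have hf1 : g 1 0 = -(t^3) := by rw [hg]; simp [γ.target]; rfl
    have hmem : (0:ℝ) ∈ Set.Icc ((fun τ => g τ 0) 1) ((fun τ => g τ 0) 0) := by
      simp only [hf0, hf1]
      constructor <;> nlinarith
    obtain ⟨s, hs⟩ := intermediate_value_univ 1 0 hf hmem
    have hz : g s = 0 := by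
      have hmem2 : (g s) 0 ^ 2 = (g s) 1 ^ 3 := (γ s).2.1
      have h0 : g s 0 = 0 := hs
      have h1 : g s 1 = 0 := by
        have : (g s 1) ^ 3 = 0 := by rw [← hmem2, h0]; ring
        exact pow_eq_zero_iff (by norm_num) |>.mp this
      ext i; fin_cases i <;> simp [h0, h1]
    -- lower bound on length via three points 0 ≤ s ≤ 1
    set u : ℕ → unitInterval := fun n => match n with | 0 => 0 | 1 => s | _ => 1 with hu
    have hmono : Monotone u := by
      intro i j hij
      match i, j with
      | 0, 0 => exact le_refl _
      | 0, 1 => exact unitInterval.nonneg' 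
      | 0, (j+2) => exact unitInterval.nonneg'
      | 1, 0 => omega
      | 1, 1 => exact le_refl _
      | 1, (j+2) => exact unitInterval.le_one'
      | (i+2), 0 => omega
      | (i+2), 1 => omega
      | (i+2), (j+2) => exact le_refl _
    have hsum := eVariationOn.sum_le (f := g) (n := 2) hmono (fun i => Set.mem_univ _)
    rw [Finset.sum_range_succ, Finset.sum_range_one] at hsum
    have hu0 : u 0 = 0 := rfl
    have hu1 : u 1 = s := rfl
    have hu2 : u 2 = 1 := rfl
    rw [hu0, hu1, hu2] at hsum
    have hg0 : g 0 = p := by rw [hg]; simp [γ.source]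
    have hg1 : g 1 = q := by rw [hg]; simp [γ.target]
    rw [hz, hg0, hg1] at hsum
    show ENNReal.ofReal (2*t^2) ≤ eVariationOn g Set.univ
    refine le_trans ?_ hsum
    rw [edist_dist, edist_dist, dist_zero_left, dist_zero_right]
    rw [← ENNReal.ofReal_add (norm_nonneg _) (norm_nonneg _)]
    exact ENNReal.ofReal_le_ofReal (by linarith)
  refine lt_of_lt_of_le ?_ key
  rw [hpq]
  rw [ENNReal.ofReal_lt_ofReal_iff (by positivity)]
  have hCt : C * t ≤ 1/2 := by
    calc C * t ≤ C * (1/(2*C)) := by exact mul_le_mul_of_nonneg_left htC hC0.le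
    _ = 1/2 := by field_simp
  nlinarith [pow_pos ht0 2, pow_pos ht0 3]
end
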